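/- Let (A, L) be an extended complete spectral metric space, F = (f_1, …, f_k) a strictly contractive dual IFS on A with Λ := max_i dilup(f_i) < 1, φ₀ a state on A with C := max_i d_L(φ₀, φ₀ ∘ f_i) < ∞, and π weights with every π_i > 0. Let Ω := {1, …, k}^ℕ carry the product σ-algebra where each factor has the discrete σ-algebra, and let P_π be the product probability measure on Ω whose every factor assigns mass π_i to the symbol i. For ω ∈ Ω let φ_ω denote the d_L-limit of (φ₀ ∘ f_{ω|_M})_{M=1}^∞, and let φ_π denote the d_L-limit of ((π·F*)^M(φ₀))_{M=0}^∞. Then for every a ∈ A the function ω ↦ φ_ω(a) is measurable, and φ_π(a) = ∫_Ω φ_ω(a) dP_π(ω). -/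

import Mathlib

open Filter Topology
open scoped ComplexOrder ENNReal NNReal MultiplierAlgebra

noncomputable section

/-- A *state* on a C⋆-algebra: a continuous linear functional into `ℂ` that is nonnegative
on nonnegative elements and has norm `1`. -/
def IsState {E : Type*} [NormedAddCommGroup E] [NormedSpace ℂ E] [PartialOrder E]
    (φ : E →L[ℂ] ℂ) : Prop :=
  (∀ a : E, 0 ≤ a → 0 ≤ φ a) ∧ ‖φ‖ = 1

variable {A : Type*} [NonUnitalCStarAlgebra A] [PartialOrder A] [StarOrderedRing A]

/-- `L` is an extended seminorm on the self-adjoint part `A_sa` of `A`: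
`L (t • b) = |t| * L b` for real `t`, and `L (b + b') ≤ L b + L b'`. -/
def IsESeminorm (L : selfAdjoint A → ℝ≥0∞) : Prop :=
  (∀ (t : ℝ) (b : selfAdjoint A), L (t • b) = (‖t‖₊ : ℝ≥0∞) * L b) ∧
    ∀ b b' : selfAdjoint A, L (b + b') ≤ L b + L b'

/-- The spectral distance `d_L(φ, ψ) = sup { |φ b - ψ b| : b ∈ A_sa, L b ≤ 1 }`,
valued in `[0, ∞]`. -/
def dL (L : selfAdjoint A → ℝ≥0∞) (φ ψ : A → ℂ) : ℝ≥0∞ :=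
  ⨆ b : {b : selfAdjoint A // L b ≤ 1}, (‖φ (b.1 : A) - ψ (b.1 : A)‖₊ : ℝ≥0∞)

/-- An approximate identity for `A`: a net `(I n)` with `0 ≤ I n`, `‖I n‖ ≤ 1`, and
`‖I n * a - a‖ → 0`, `‖a * I n - a‖ → 0` for every `a : A`. -/
def IsApproxUnit {ι : Type*} [Preorder ι] (I : ι → A) : Prop :=
  (∀ n, 0 ≤ I n) ∧ (∀ n, ‖I n‖ ≤ 1) ∧
    ∀ a : A, Tendsto (fun n => ‖I n * a - a‖) atTop (𝓝 0) ∧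
      Tendsto (fun n => ‖a * I n - a‖) atTop (𝓝 0)

/-- A (self-adjoint valued) approximate identity `(I n)` for `A` along which `L` tends to `0`. -/
structure SpectralAUData (L : selfAdjoint A → ℝ≥0∞) where
  ι : Type
  [pre : Preorder ι]
  [ne : Nonempty ι]
  [dir : IsDirected ι (· ≤ ·)]
  I : ι → selfAdjoint A
  isAU : IsApproxUnit fun n => (I n : A)
  tendsto_L : Tendsto (fun n => L (I n)) atTop (𝓝 0)

/-- `(A, L)` is an extended complete spectral metric space: the finite-`L` self-adjoint
elements are dense, there is an approximate identity along which `L` tends to `0`, and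
`L` is norm-lower semicontinuous. -/
structure IsECSMS (L : selfAdjoint A → ℝ≥0∞) : Prop where
  seminorm : IsESeminorm L
  dense_finite : Dense {b : selfAdjoint A | L b < ⊤}
  lsc : LowerSemicontinuous L
  approxUnit : Nonempty (SpectralAUData L)

/-- A witness that the `*`-homomorphism `f : A → A` is proper: an approximate identity
whose image under `f` is again an approximate identity. -/
structure ProperWitness (f : A →⋆ₙₐ[ℂ] A) where
  ι : Type
  [pre : Preorder ι]
  [ne : Nonempty ι]
  [dir : IsDirected ι (· ≤ ·)]
  I : ι → A
  isAU : IsApproxUnit I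
  isAU_map : IsApproxUnit fun n => f (I n)

/-- A `*`-homomorphism `f : A → A` is proper if there is an approximate identity `(I n)`
for `A` such that `(f (I n))` is again an approximate identity for `A`. -/
def IsProperHom (f : A →⋆ₙₐ[ℂ] A) : Prop := Nonempty (ProperWitness f)

/-- The upper dilation factor `dilup f = sup { L (f b) : b ∈ A_sa, L b ≤ 1 }`. -/
def dilup (L : selfAdjoint A → ℝ≥0∞) (f : A →⋆ₙₐ[ℂ] A) : ℝ≥0∞ :=
  ⨆ b : {b : selfAdjoint A // L b ≤ 1}, L ⟨f (b.1 : A), b.1.2.map f⟩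

/-- The dual operator `(π·F*) φ = Σ_i π_i (φ ∘ f_i)` acting on `ℂ`-valued functionals. -/
def piF {k : ℕ} (f : Fin k → A →⋆ₙₐ[ℂ] A) (π : Fin k → ℝ≥0) (φ : A → ℂ) : A → ℂ :=
  fun a => ∑ i, ((π i : ℝ) : ℂ) * φ (f i a)

/-- For a finite word `ω = (ω 0, …, ω (M-1))`, the composite `f_ω = f_{ω 0} ∘ … ∘ f_{ω (M-1)}`. -/
def wordMapF {k : ℕ} (f : Fin k → A →⋆ₙₐ[ℂ] A) : (M : ℕ) → (Fin M → Fin k) → A → A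
  | 0, _, a => a
  | M + 1, ω, a => wordMapF f M (fun i => ω i.castSucc) (f (ω (Fin.last M)) a)

-- auxiliary lemmas

lemma wordMapF_add {k : ℕ} (f : Fin k → A →⋆ₙₐ[ℂ] A) :
    ∀ (M : ℕ) (ω : Fin M → Fin k) (a b : A),
      wordMapF f M ω (a + b) = wordMapF f M ω a + wordMapF f M ω b
  | 0, _, _, _ => rfl
  | M + 1, ω, a, b => by
    simp only [wordMapF, map_add]
    exact wordMapF_add f M _ _ _

lemma wordMapF_smul {k : ℕ} (f : Fin k → A →⋆ₙₐ[ℂ] A) :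
    ∀ (M : ℕ) (ω : Fin M → Fin k) (c : ℂ) (a : A),
      wordMapF f M ω (c • a) = c • wordMapF f M ω a
  | 0, _, _, _ => rfl
  | M + 1, ω, c, a => by
    simp only [wordMapF, map_smul]
    exact wordMapF_smul f M _ _ _

lemma wordMapF_norm_le {k : ℕ} (f : Fin k → A →⋆ₙₐ[ℂ] A) :
    ∀ (M : ℕ) (ω : Fin M → Fin k) (a : A), ‖wordMapF f M ω a‖ ≤ ‖a‖
  | 0, _, _ => le_refl _
  | M + 1, ω, a =>
    (wordMapF_norm_le f M _ _).trans (NonUnitalStarAlgHom.norm_apply_le _ a)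

lemma wordMapF_cons {k : ℕ} (f : Fin k → A →⋆ₙₐ[ℂ] A) :
    ∀ (M : ℕ) (j : Fin k) (ω : Fin M → Fin k) (a : A),
      wordMapF f (M + 1) (Fin.cons j ω) a = f j (wordMapF f M ω a)
  | 0, j, ω, a => by simp [wordMapF]
  | M + 1, j, ω, a => by
    have h1 : (fun i : Fin (M + 1) => (Fin.cons j ω : Fin (M + 2) → Fin k) i.castSucc)
        = (Fin.cons j (fun i : Fin M => ω i.castSucc) : Fin (M + 1) → Fin k) := by
      funext i
      refine Fin.cases ?_ (fun i' => ?_) i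
      · simp
      · rw [← Fin.succ_castSucc, Fin.cons_succ, Fin.cons_succ]
    have h2 : (Fin.cons j ω : Fin (M + 2) → Fin k) (Fin.last (M + 1)) = ω (Fin.last M) := by
      rw [← Fin.succ_last, Fin.cons_succ]
    show wordMapF f (M + 1) (fun i => (Fin.cons j ω : Fin (M + 2) → Fin k) i.castSucc)
        (f ((Fin.cons j ω : Fin (M + 2) → Fin k) (Fin.last (M + 1))) a) = _
    rw [h1, h2, wordMapF_cons f M]
    rfl

lemma sum_prod_weights {k : ℕ} (π : Fin k → ℝ≥0) (hπ : ∑ i, π i = 1) :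
    ∀ M : ℕ, ∑ ω : Fin M → Fin k, ∏ i, π (ω i) = 1
  | 0 => by simp
  | M + 1 => by
    rw [← ((Fin.consEquiv (fun _ : Fin (M + 1) => Fin k)).sum_comp (fun ω => ∏ i, π (ω i)))]
    rw [Fintype.sum_prod_type]
    have : ∀ (j : Fin k) (ω : Fin M → Fin k),
        ∏ i, π ((Fin.cons j ω : Fin (M + 1) → Fin k) i) = π j * ∏ i, π (ω i) := by
      intro j ω; rw [Fin.prod_univ_succ]; simp
    simp only [Fin.consEquiv_apply, this]
    rw [← Finset.sum_mul_sum]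
    rw [hπ, sum_prod_weights π hπ M, one_mul]

lemma piF_iterate_eq {k : ℕ} (f : Fin k → A →⋆ₙₐ[ℂ] A) (π : Fin k → ℝ≥0) :
    ∀ (M : ℕ) (φ : A → ℂ) (a : A),
      (piF f π)^[M] φ a
        = ∑ ω : Fin M → Fin k, ((∏ i, (π (ω i) : ℝ) : ℝ) : ℂ) * φ (wordMapF f M ω a)
  | 0, φ, a => by simp [wordMapF]
  | M + 1, φ, a => by
    rw [Function.iterate_succ_apply, piF_iterate_eq f π M (piF f π φ) a]
    simp only [piF, Finset.mul_sum]
    rw [Finset.sum_comm]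
    rw [← ((Fin.consEquiv (fun _ : Fin (M + 1) => Fin k)).sum_comp
      (fun ω => ((∏ i, (π (ω i) : ℝ) : ℝ) : ℂ) * φ (wordMapF f (M + 1) ω a)))]
    rw [Fintype.sum_prod_type]
    refine Finset.sum_congr rfl fun j _ => Finset.sum_congr rfl fun ω _ => ?_
    simp only [piF, Fin.consEquiv_apply]
    have he : (Fin.consEquiv fun _ : Fin (M + 1) => Fin k) (j, ω)
        = (Fin.cons j ω : Fin (M + 1) → Fin k) := rfl
    rw [he, wordMapF_cons, Fin.prod_univ_succ]
    simp only [Fin.cons_zero, Fin.cons_succ]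
    push_cast
    ring

/-- The word map as a continuous linear map. -/
def wordL {k : ℕ} (f : Fin k → A →⋆ₙₐ[ℂ] A) (M : ℕ) (ω : Fin M → Fin k) : A →L[ℂ] A :=
  LinearMap.mkContinuous
    { toFun := wordMapF f M ω
      map_add' := wordMapF_add f M ω
      map_smul' := wordMapF_smul f M ω }
    1 (fun a => by simpa using wordMapF_norm_le f M ω a)

lemma wordL_norm_le {k : ℕ} (f : Fin k → A →⋆ₙₐ[ℂ] A) (M : ℕ) (ω : Fin M → Fin k) :
    ‖wordL f M ω‖ ≤ 1 :=
  LinearMap.mkContinuous_norm_le _ zero_le_one _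

lemma wordL_apply {k : ℕ} (f : Fin k → A →⋆ₙₐ[ℂ] A) (M : ℕ) (ω : Fin M → Fin k) (a : A) :
    wordL f M ω a = wordMapF f M ω a := rfl

/-- Key convergence lemma: `dL`-convergence of uniformly bounded functionals implies
pointwise (weak-*) convergence. -/
lemma tendsto_of_dL_tendsto (L : selfAdjoint A → ℝ≥0∞) (hL : IsECSMS L)
    (ψ : ℕ → A →L[ℂ] ℂ) (φ : A →L[ℂ] ℂ)
    (hψ : ∀ M, ‖ψ M‖ ≤ 1) (hφ : ‖φ‖ ≤ 1)
    (h : Tendsto (fun M => dL L ⇑(ψ M) ⇑φ) atTop (𝓝 0)) (a : A) :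
    Tendsto (fun M => ψ M a) atTop (𝓝 (φ a)) := by
  have step1 : ∀ b : selfAdjoint A, L b < ⊤ →
      Tendsto (fun M => ψ M (b : A)) atTop (𝓝 (φ (b : A))) := by
    intro b hb
    set c : ℝ≥0 := 1 + (L b).toNNReal with hc
    have hcne : c ≠ 0 := by simp [hc]
    have hc0 : (c : ℝ≥0∞) ≠ 0 := by simp [hc]
    have hct : (c : ℝ≥0∞) ≠ ⊤ := ENNReal.coe_ne_top
    have hLbc : L b ≤ (c : ℝ≥0∞) := by
      rw [hc]
      push_cast
      calc L b = ((L b).toNNReal : ℝ≥0∞) := (ENNReal.coe_toNNReal hb.ne).symm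
        _ ≤ 1 + ((L b).toNNReal : ℝ≥0∞) := le_add_self
    -- the rescaled element
    set b' : selfAdjoint A := ((c : ℝ)⁻¹) • b with hb'
    have hLb' : L b' ≤ 1 := by
      rw [hb', hL.seminorm.1]
      have hn : (‖(c : ℝ)⁻¹‖₊ : ℝ≥0∞) = (c : ℝ≥0∞)⁻¹ := by
        rw [nnnorm_inv, NNReal.nnnorm_eq, ENNReal.coe_inv hcne]
      rw [hn]
      calc (c : ℝ≥0∞)⁻¹ * L b ≤ (c : ℝ≥0∞)⁻¹ * c :=
            mul_le_mul_right hLbc _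
        _ = 1 := ENNReal.inv_mul_cancel hc0 hct
    have key : ∀ M, (‖ψ M (b : A) - φ (b : A)‖₊ : ℝ≥0∞) ≤ c * dL L ⇑(ψ M) ⇑φ := by
      intro M
      have h1 : (‖ψ M (b' : A) - φ (b' : A)‖₊ : ℝ≥0∞) ≤ dL L ⇑(ψ M) ⇑φ :=
        le_iSup (fun (x : {b : selfAdjoint A // L b ≤ 1}) =>
          (‖ψ M (x.1 : A) - φ (x.1 : A)‖₊ : ℝ≥0∞)) ⟨b', hLb'⟩
      have h2 : (b' : A) = (c : ℝ)⁻¹ • (b : A) := rfl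
      have h3 : ψ M (b' : A) - φ (b' : A) = (c : ℝ)⁻¹ • (ψ M (b : A) - φ (b : A)) := by
        rw [h2, (ψ M).map_smul_of_tower, φ.map_smul_of_tower, smul_sub]
      have h4 : (‖ψ M (b' : A) - φ (b' : A)‖₊ : ℝ≥0∞)
          = (c : ℝ≥0∞)⁻¹ * (‖ψ M (b : A) - φ (b : A)‖₊ : ℝ≥0∞) := by
        rw [h3, nnnorm_smul]
        push_cast
        rw [nnnorm_inv, NNReal.nnnorm_eq, ENNReal.coe_inv hcne]
      rw [h4] at h1
      calc (‖ψ M (b : A) - φ (b : A)‖₊ : ℝ≥0∞)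
          = c * ((c : ℝ≥0∞)⁻¹ * (‖ψ M (b : A) - φ (b : A)‖₊ : ℝ≥0∞)) := by
            rw [← mul_assoc, ENNReal.mul_inv_cancel hc0 hct, one_mul]
        _ ≤ c * dL L ⇑(ψ M) ⇑φ := mul_le_mul_right h1 _
    have hsq : Tendsto (fun M => (‖ψ M (b : A) - φ (b : A)‖₊ : ℝ≥0∞)) atTop (𝓝 0) := by
      have hmul : Tendsto (fun M => (c : ℝ≥0∞) * dL L ⇑(ψ M) ⇑φ) atTop (𝓝 0) := by
        have := ENNReal.Tendsto.const_mul (a := (c : ℝ≥0∞)) h (Or.inr hct)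
        simpa using this
      exact tendsto_of_tendsto_of_tendsto_of_le_of_le tendsto_const_nhds hmul
        (fun M => zero_le) key
    rw [tendsto_iff_norm_sub_tendsto_zero]
    have : Tendsto (fun M => ‖ψ M (b : A) - φ (b : A)‖₊) atTop (𝓝 0) := by
      rw [← ENNReal.coe_zero] at hsq
      exact (ENNReal.tendsto_coe).mp hsq
    have h5 := NNReal.tendsto_coe.mpr this
    simpa using h5
  have step2 : ∀ b : selfAdjoint A,
      Tendsto (fun M => ψ M (b : A)) atTop (𝓝 (φ (b : A))) := by
    intro b
    rw [Metric.tendsto_atTop]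
    intro ε hε
    obtain ⟨b', hb', hdist⟩ : ∃ b' ∈ {b : selfAdjoint A | L b < ⊤}, dist b b' < ε / 3 :=
      Metric.mem_closure_iff.mp (hL.dense_finite b) (ε / 3) (by positivity)
    have h1 := step1 b' hb'
    rw [Metric.tendsto_atTop] at h1
    obtain ⟨N, hN⟩ := h1 (ε / 3) (by positivity)
    refine ⟨N, fun M hM => ?_⟩
    have hbb' : ‖(b : A) - (b' : A)‖ < ε / 3 := by
      have := hdist
      rw [Subtype.dist_eq, dist_eq_norm] at this
      exact this
    have e1 : dist (ψ M (b : A)) (ψ M (b' : A)) < ε / 3 := by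
      rw [dist_eq_norm, ← map_sub]
      calc ‖ψ M ((b : A) - (b' : A))‖ ≤ ‖ψ M‖ * ‖(b : A) - (b' : A)‖ :=
            (ψ M).le_opNorm _
        _ ≤ 1 * ‖(b : A) - (b' : A)‖ := by
            exact mul_le_mul_of_nonneg_right (hψ M) (norm_nonneg _)
        _ < ε / 3 := by rw [one_mul]; exact hbb'
    have e3 : dist (φ (b' : A)) (φ (b : A)) < ε / 3 := by
      rw [dist_eq_norm, ← map_sub]
      calc ‖φ ((b' : A) - (b : A))‖ ≤ ‖φ‖ * ‖(b' : A) - (b : A)‖ := φ.le_opNorm _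
        _ ≤ 1 * ‖(b' : A) - (b : A)‖ :=
            mul_le_mul_of_nonneg_right hφ (norm_nonneg _)
        _ < ε / 3 := by rw [one_mul, norm_sub_rev]; exact hbb'
    calc dist (ψ M (b : A)) (φ (b : A))
        ≤ dist (ψ M (b : A)) (ψ M (b' : A)) + dist (ψ M (b' : A)) (φ (b' : A))
          + dist (φ (b' : A)) (φ (b : A)) := dist_triangle4 _ _ _ _
      _ < ε / 3 + ε / 3 + ε / 3 := add_lt_add (add_lt_add e1 (hN M hM)) e3
      _ = ε := by ring
  -- decompose into real and imaginary parts
  have ha := realPart_add_I_smul_imaginaryPart a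
  have hψa : ∀ M, ψ M a = ψ M ((realPart a : A))
      + Complex.I * ψ M ((imaginaryPart a : A)) := by
    intro M
    conv_lhs => rw [← ha]
    rw [map_add, map_smul, smul_eq_mul]
  have hφa : φ a = φ ((realPart a : A)) + Complex.I * φ ((imaginaryPart a : A)) := by
    conv_lhs => rw [← ha]
    rw [map_add, map_smul, smul_eq_mul]
  rw [hφa]
  simp only [hψa]
  exact ((step2 (realPart a)).add ((step2 (imaginaryPart a)).const_mul _))

open MeasureTheory in
/-- The self-similar state `φ_π` is the `P_π`-average of the word-limit states `φ_ω`: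
`ω ↦ φ_ω(a)` is measurable and `φ_π(a) = ∫ φ_ω(a) dP_π(ω)` for every `a : A`. -/
theorem selfSimilar_eq_integral_wordLimits (L : selfAdjoint A → ℝ≥0∞) (hL : IsECSMS L)
    {k : ℕ} (f : Fin k → A →⋆ₙₐ[ℂ] A) (hf : ∀ i, IsProperHom (f i))
    (Λ C : ℝ≥0∞) (hΛdef : Λ = ⨆ i, dilup L (f i)) (hΛ : Λ < 1)
    (φ₀ : A →L[ℂ] ℂ) (hφ₀ : IsState φ₀)
    (hCdef : C = ⨆ i, dL L ⇑φ₀ (fun a => φ₀ (f i a))) (hC : C < ⊤)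
    (π : Fin k → ℝ≥0) (hπ : ∑ i, π i = 1) (hπpos : ∀ i, 0 < π i)
    (P : Measure (ℕ → Fin k)) [IsProbabilityMeasure P]
    (hP : ∀ (M : ℕ) (ω : Fin M → Fin k),
      P {ω' : ℕ → Fin k | ∀ i : Fin M, ω' i.val = ω i} = ∏ i, (π (ω i) : ℝ≥0∞))
    (Φ : (ℕ → Fin k) → (A →L[ℂ] ℂ)) (hΦstate : ∀ ω, IsState (Φ ω))
    (hΦlim : ∀ ω : ℕ → Fin k,
      Tendsto (fun M => dL L (fun a => φ₀ (wordMapF f M (fun i => ω i.val) a)) ⇑(Φ ω))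
        atTop (𝓝 0))
    (φπ : A →L[ℂ] ℂ) (hφπstate : IsState φπ)
    (hφπ : Tendsto (fun M => dL L ((piF f π)^[M] ⇑φ₀) ⇑φπ) atTop (𝓝 0)) :
    ∀ a : A, Measurable (fun ω => Φ ω a) ∧ φπ a = ∫ ω, Φ ω a ∂P := by
  intro a
  have hφ₀norm : ‖φ₀‖ ≤ 1 := le_of_eq hφ₀.2
  have hpM : ∀ M : ℕ, Measurable (fun (ω : ℕ → Fin k) (i : Fin M) => ω i.val) := fun M =>
    measurable_pi_lambda _ fun i => measurable_pi_apply _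
  have hgmeas : ∀ M : ℕ,
      Measurable (fun ω : ℕ → Fin k => φ₀ (wordMapF f M (fun i => ω i.val) a)) := fun M =>
    (Measurable.of_discrete (f := fun τ : Fin M → Fin k => φ₀ (wordMapF f M τ a))).comp (hpM M)
  have hcompnorm : ∀ (M : ℕ) (ω : Fin M → Fin k), ‖φ₀.comp (wordL f M ω)‖ ≤ 1 := by
    intro M ω
    refine le_trans (ContinuousLinearMap.opNorm_comp_le _ _) ?_
    calc ‖φ₀‖ * ‖wordL f M ω‖ ≤ 1 * 1 :=
          mul_le_mul hφ₀norm (wordL_norm_le f M ω) (norm_nonneg _) zero_le_one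
      _ = 1 := one_mul 1
  have hgtendsto : ∀ ω : ℕ → Fin k,
      Tendsto (fun M => φ₀ (wordMapF f M (fun i => ω i.val) a)) atTop (𝓝 (Φ ω a)) := by
    intro ω
    exact tendsto_of_dL_tendsto L hL
      (fun M => φ₀.comp (wordL f M (fun i => ω i.val))) (Φ ω)
      (fun M => hcompnorm M _) (le_of_eq (hΦstate ω).2) (hΦlim ω) a
  have hmeasΦ : Measurable (fun ω => Φ ω a) :=
    measurable_of_tendsto_metrizable' atTop hgmeas (tendsto_pi_nhds.mpr hgtendsto)
  -- convergence of the iterates at `a`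
  have hφπlim : Tendsto (fun M => (piF f π)^[M] ⇑φ₀ a) atTop (𝓝 (φπ a)) := by
    have hTcoe : ∀ M : ℕ,
        ⇑(∑ ω : Fin M → Fin k, (∏ i, (π (ω i) : ℝ)) • φ₀.comp (wordL f M ω))
          = (piF f π)^[M] ⇑φ₀ := by
      intro M
      funext x
      rw [piF_iterate_eq]
      simp only [ContinuousLinearMap.coe_sum', Finset.sum_apply,
        ContinuousLinearMap.coe_smul', Pi.smul_apply, ContinuousLinearMap.coe_comp',
        Function.comp_apply, Complex.real_smul, wordL_apply]
    have hTnorm : ∀ M : ℕ,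
        ‖∑ ω : Fin M → Fin k, (∏ i, (π (ω i) : ℝ)) • φ₀.comp (wordL f M ω)‖ ≤ 1 := by
      intro M
      calc ‖∑ ω : Fin M → Fin k, (∏ i, (π (ω i) : ℝ)) • φ₀.comp (wordL f M ω)‖
          ≤ ∑ ω : Fin M → Fin k, ‖(∏ i, (π (ω i) : ℝ)) • φ₀.comp (wordL f M ω)‖ :=
            norm_sum_le _ _
        _ ≤ ∑ ω : Fin M → Fin k, ∏ i, (π (ω i) : ℝ) := by
            refine Finset.sum_le_sum fun ω _ => ?_
            rw [norm_smul ((∏ i, (π (ω i) : ℝ))) (φ₀.comp (wordL f M ω)), Real.norm_of_nonneg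
              (Finset.prod_nonneg fun i _ => (π (ω i)).coe_nonneg)]
            calc (∏ i, (π (ω i) : ℝ)) * ‖φ₀.comp (wordL f M ω)‖
                ≤ (∏ i, (π (ω i) : ℝ)) * 1 := mul_le_mul_of_nonneg_left (hcompnorm M ω)
                  (Finset.prod_nonneg fun i _ => (π (ω i)).coe_nonneg)
              _ = ∏ i, (π (ω i) : ℝ) := mul_one _
        _ = 1 := by exact_mod_cast sum_prod_weights π hπ M
    have := tendsto_of_dL_tendsto L hL
      (fun M => ∑ ω : Fin M → Fin k, (∏ i, (π (ω i) : ℝ)) • φ₀.comp (wordL f M ω))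
      φπ hTnorm (le_of_eq hφπstate.2)
      (by simpa only [hTcoe] using hφπ) a
    simpa only [hTcoe] using this
  -- the finite-level integral identity
  have hint : ∀ M : ℕ, (piF f π)^[M] ⇑φ₀ a
      = ∫ ω, φ₀ (wordMapF f M (fun i => ω i.val) a) ∂P := by
    intro M
    haveI : IsProbabilityMeasure (P.map (fun (ω : ℕ → Fin k) (i : Fin M) => ω i.val)) :=
      Measure.isProbabilityMeasure_map (hpM M).aemeasurable
    rw [piF_iterate_eq]
    have h1 : ∫ ω, φ₀ (wordMapF f M (fun i => ω i.val) a) ∂P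
        = ∫ τ, φ₀ (wordMapF f M τ a)
            ∂(P.map (fun (ω : ℕ → Fin k) (i : Fin M) => ω i.val)) :=
      (integral_map (hpM M).aemeasurable
        (Measurable.of_discrete (f := fun τ : Fin M → Fin k => φ₀ (wordMapF f M τ a))
          |>.aestronglyMeasurable)).symm
    rw [h1, integral_fintype (Integrable.of_finite)]
    refine Finset.sum_congr rfl fun ω _ => ?_
    rw [measureReal_def, Measure.map_apply (hpM M) (measurableSet_singleton _)]
    have hpre : (fun (ω' : ℕ → Fin k) (i : Fin M) => ω' i.val) ⁻¹' {ω}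
        = {ω' : ℕ → Fin k | ∀ i : Fin M, ω' i.val = ω i} := by
      ext ω'
      simp [Set.mem_preimage, funext_iff]
    rw [hpre, hP M ω, ← ENNReal.coe_finset_prod, ENNReal.coe_toReal, Complex.real_smul]
    push_cast
    ring
  -- dominated convergence
  have hdc : Tendsto (fun M => ∫ ω, φ₀ (wordMapF f M (fun i => ω i.val) a) ∂P) atTop
      (𝓝 (∫ ω, Φ ω a ∂P)) := by
    refine tendsto_integral_of_dominated_convergence (fun _ => ‖a‖)
      (fun M => (hgmeas M).aestronglyMeasurable) (integrable_const _)
      (fun M => Filter.Eventually.of_forall fun ω => ?_)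
      (Filter.Eventually.of_forall hgtendsto)
    calc ‖φ₀ (wordMapF f M (fun i => ω i.val) a)‖
        ≤ ‖φ₀‖ * ‖wordMapF f M (fun i => ω i.val) a‖ := φ₀.le_opNorm _
      _ ≤ 1 * ‖a‖ :=
          mul_le_mul hφ₀norm (wordMapF_norm_le f M _ a) (norm_nonneg _) zero_le_one
      _ = ‖a‖ := one_mul _
  refine ⟨hmeasΦ, ?_⟩
  simp only [hint] at hφπlim
  exact tendsto_nhds_unique hφπlim hdc
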